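/- Let Φ be a reduced crystallographic root system with simple roots α_1, …, α_n (n ≥ 2), coroot lattice R^∨, coweight lattice Q^∨, and Weyl group W, and fix an index i such that the Cartan integers ⟨α_i, α_1^∨⟩, …, ⟨α_i, α_n^∨⟩ have greatest common divisor 1. Let η ∈ Q^∨ with ⟨α_i, η⟩ = 1, set b := t^η s_i ∈ W̃ and ν := A_{s_i}η. Then the W̃-conjugacy class of b equals the union over u ∈ W of the sets { t^ξ (u s_i u⁻¹) : ξ ∈ (u(ν + ℝα_i^∨)) ∩ (η + R^∨) }. -/
import Mathlib


open scoped RealInnerProductSpace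

namespace ADLV

variable {V : Type*} [NormedAddCommGroup V] [InnerProductSpace ℝ V]

/-- The coroot `α^∨ = 2α/(α,α)` of a root `α`. -/
noncomputable def coroot (α : V) : V := (2 / ⟪α, α⟫) • α

/-- The reflection `s_α : x ↦ x - ⟨α, x⟩ α^∨` in the hyperplane orthogonal to `α`,
as a linear automorphism. -/
noncomputable def sRefl (α : V) (hα : α ≠ 0) : V ≃ₗ[ℝ] V :=
  Module.reflection (f := (innerSL ℝ α : V →ₗ[ℝ] ℝ)) (x := coroot α)
    (by
      have h : ⟪α, α⟫ ≠ 0 := inner_self_ne_zero.mpr hα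
      simp [coroot, real_inner_smul_right]
      field_simp)

/-- The averaging operator `A_w = (1/m)(I + w + w² + ⋯ + w^{m-1})`. -/
noncomputable def avgProj (m : ℕ) (w : V ≃ₗ[ℝ] V) : V →ₗ[ℝ] V :=
  (m : ℝ)⁻¹ • ∑ i ∈ Finset.range m, ((w ^ i : V ≃ₗ[ℝ] V) : V →ₗ[ℝ] V)

/-- The (finite) Weyl group: the group generated by the simple reflections. -/
noncomputable def weylGroup {n : ℕ} (α : Fin n → V) (hα : ∀ j, α j ≠ 0) :
    Subgroup (V ≃ₗ[ℝ] V) :=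
  Subgroup.closure (Set.range fun j => sRefl (α j) (hα j))

/-- The coroot lattice `R^∨ = ⊕_j ℤ α_j^∨`. -/
noncomputable def corootLattice {n : ℕ} (α : Fin n → V) : AddSubgroup V :=
  AddSubgroup.closure (Set.range fun j => coroot (α j))

/-- The coweight lattice `Q^∨ = {x : ⟨α_j, x⟩ ∈ ℤ for all j}`. -/
def coweightLattice {n : ℕ} (α : Fin n → V) : Set V :=
  {x : V | ∀ j, ∃ m : ℤ, ⟪α j, x⟫ = (m : ℝ)}

/-- Elements `t^μ u` of the (extended) affine Weyl group `Q^∨ ⋊ W`, realized inside the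
semidirect product `V ⋊ GL(V)` with multiplication `(t^μ u)(t^λ v) = t^{μ + uλ}(uv)`. -/
@[ext]
structure Aff (V : Type*) [NormedAddCommGroup V] [InnerProductSpace ℝ V] where
  /-- the translation part -/
  t : V
  /-- the linear part -/
  w : V ≃ₗ[ℝ] V

namespace Aff

instance : Mul (Aff V) := ⟨fun a b => ⟨a.t + a.w b.t, a.w * b.w⟩⟩
instance : One (Aff V) := ⟨⟨0, 1⟩⟩
instance : Inv (Aff V) := ⟨fun a => ⟨-(a.w⁻¹ a.t), a.w⁻¹⟩⟩

@[simp] lemma mul_t (a b : Aff V) : (a * b).t = a.t + a.w b.t := rfl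
@[simp] lemma mul_w (a b : Aff V) : (a * b).w = a.w * b.w := rfl
@[simp] lemma one_t : (1 : Aff V).t = 0 := rfl
@[simp] lemma one_w : (1 : Aff V).w = 1 := rfl
@[simp] lemma inv_t (a : Aff V) : (a⁻¹).t = -(a.w⁻¹ a.t) := rfl
@[simp] lemma inv_w (a : Aff V) : (a⁻¹).w = a.w⁻¹ := rfl

lemma mul_apply_w (f g : V ≃ₗ[ℝ] V) (x : V) : (f * g) x = f (g x) := rfl

instance : Group (Aff V) where
  mul_assoc a b c := by
    refine Aff.ext ?_ ?_
    · simp [mul_apply_w, map_add, add_assoc]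
    · simp [mul_assoc]
  one_mul a := by refine Aff.ext ?_ ?_ <;> simp
  mul_one a := by refine Aff.ext ?_ ?_ <;> simp
  inv_mul_cancel a := by
    refine Aff.ext ?_ ?_
    · simp [mul_apply_w]
    · simp

end Aff


/-! ### Auxiliary lemmas -/


lemma inner_coroot_self (α : V) (hα : α ≠ 0) : ⟪α, coroot α⟫ = 2 := by
  have h : ⟪α, α⟫ ≠ 0 := inner_self_ne_zero.mpr hα
  simp [coroot, real_inner_smul_right]
  field_simp

lemma sRefl_apply (α : V) (hα : α ≠ 0) (x : V) :
    sRefl α hα x = x - ⟪α, x⟫ • coroot α := by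
  simp [sRefl, Module.reflection_apply]

lemma sRefl_mul_self (α : V) (hα : α ≠ 0) : sRefl α hα * sRefl α hα = 1 := by
  refine LinearEquiv.ext fun x => ?_
  have h2 := inner_coroot_self α hα
  show sRefl α hα (sRefl α hα x) = x
  simp [sRefl_apply, inner_sub_right, real_inner_smul_right, h2]
  module

lemma sRefl_inv (α : V) (hα : α ≠ 0) : (sRefl α hα)⁻¹ = sRefl α hα :=
  inv_eq_of_mul_eq_one_right (sRefl_mul_self α hα)

lemma inv_apply_apply (u : V ≃ₗ[ℝ] V) (x : V) : u⁻¹ (u x) = x := by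
  rw [← Aff.mul_apply_w, inv_mul_cancel]; rfl

lemma apply_inv_apply (u : V ≃ₗ[ℝ] V) (x : V) : u (u⁻¹ x) = x := by
  rw [← Aff.mul_apply_w, mul_inv_cancel]; rfl

lemma avgProj_two_apply (w : V ≃ₗ[ℝ] V) (x : V) :
    avgProj 2 w x = (2 : ℝ)⁻¹ • (x + w x) := by
  simp [avgProj, Finset.sum_range_succ]

/-- The coweight lattice as an additive subgroup. -/
def cowt {n : ℕ} (α : Fin n → V) : AddSubgroup V where
  carrier := coweightLattice α
  zero_mem' := fun j => ⟨0, by simp⟩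
  add_mem' := by
    rintro x y hx hy j
    obtain ⟨m, hm⟩ := hx j
    obtain ⟨m', hm'⟩ := hy j
    exact ⟨m + m', by rw [inner_add_right, hm, hm']; push_cast; ring⟩
  neg_mem' := by
    rintro x hx j
    obtain ⟨m, hm⟩ := hx j
    exact ⟨-m, by rw [inner_neg_right, hm]; push_cast; ring⟩

lemma mem_cowt {n : ℕ} {α : Fin n → V} {x : V} :
    x ∈ cowt α ↔ x ∈ coweightLattice α := Iff.rfl

lemma mem_corootLattice {n : ℕ} {α : Fin n → V} {x : V} :
    x ∈ corootLattice α ↔ ∃ m : Fin n → ℤ, x = ∑ j, (m j : ℝ) • coroot (α j) := by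
  have h : x ∈ corootLattice α ↔
      x ∈ Submodule.span ℤ (Set.range fun j => coroot (α j)) := by
    rw [corootLattice, ← Submodule.span_int_eq_addSubgroupClosure]; rfl
  rw [h, Submodule.mem_span_range_iff_exists_fun]
  constructor
  · rintro ⟨c, rfl⟩
    exact ⟨c, by simp [Int.cast_smul_eq_zsmul]⟩
  · rintro ⟨m, rfl⟩
    exact ⟨m, by simp [Int.cast_smul_eq_zsmul]⟩

lemma smul_coroot_mem {n : ℕ} {α : Fin n → V} (c : ℤ) (j : Fin n) :
    (c : ℝ) • coroot (α j) ∈ corootLattice α := by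
  rw [Int.cast_smul_eq_zsmul]
  exact AddSubgroup.zsmul_mem _ (AddSubgroup.subset_closure (Set.mem_range_self j)) c

lemma corootLattice_le_cowt {n : ℕ} {α : Fin n → V}
    (hcart : ∀ k j, ∃ m : ℤ, ⟪α k, coroot (α j)⟫ = (m : ℝ)) :
    corootLattice α ≤ cowt α := by
  rw [corootLattice, AddSubgroup.closure_le]
  rintro _ ⟨j, rfl⟩ k
  exact hcart k j

/-- The stability property: `w` preserves the coweight lattice and moves coweights by
elements of the coroot lattice. -/
def Stab {n : ℕ} (α : Fin n → V) (w : V ≃ₗ[ℝ] V) : Prop :=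
  ∀ x ∈ cowt α, w x ∈ cowt α ∧ x - w x ∈ corootLattice α

lemma stab_gen {n : ℕ} {α : Fin n → V} (hα : ∀ j, α j ≠ 0)
    (hcart : ∀ k j, ∃ m : ℤ, ⟪α k, coroot (α j)⟫ = (m : ℝ)) (j : Fin n) :
    Stab α (sRefl (α j) (hα j)) := by
  intro x hx
  obtain ⟨m, hm⟩ := hx j
  have hs : sRefl (α j) (hα j) x = x - (m : ℝ) • coroot (α j) := by
    rw [sRefl_apply, hm]
  refine ⟨?_, ?_⟩
  · rw [hs]
    exact AddSubgroup.sub_mem _ hx (corootLattice_le_cowt hcart (smul_coroot_mem m j))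
  · rw [hs]
    simpa using smul_coroot_mem (α := α) m j

lemma stab_one {n : ℕ} {α : Fin n → V} : Stab α 1 := fun x hx =>
  ⟨hx, by simpa using (corootLattice α).zero_mem⟩

lemma stab_mul {n : ℕ} {α : Fin n → V} {a b : V ≃ₗ[ℝ] V}
    (ha : Stab α a) (hb : Stab α b) : Stab α (a * b) := by
  intro x hx
  obtain ⟨h1, h2⟩ := hb x hx
  obtain ⟨h3, h4⟩ := ha _ h1
  have hab : (a * b) x = a (b x) := rfl
  refine ⟨by rw [hab]; exact h3, ?_⟩
  have : x - (a * b) x = (x - b x) + (b x - a (b x)) := by rw [hab]; abel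
  rw [this]
  exact AddSubgroup.add_mem _ h2 h4

lemma weyl_stab {n : ℕ} {α : Fin n → V} {hα : ∀ j, α j ≠ 0}
    (hcart : ∀ k j, ∃ m : ℤ, ⟪α k, coroot (α j)⟫ = (m : ℝ))
    {w : V ≃ₗ[ℝ] V} (hw : w ∈ weylGroup α hα) :
    Stab α w ∧ Stab α w⁻¹ := by
  refine Subgroup.closure_induction ?_ ?_ ?_ ?_ hw
  · rintro _ ⟨j, rfl⟩
    exact ⟨stab_gen hα hcart j, by rw [sRefl_inv]; exact stab_gen hα hcart j⟩
  · exact ⟨stab_one, by rw [inv_one]; exact stab_one⟩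
  · rintro a b _ _ ⟨ha, ha'⟩ ⟨hb, hb'⟩
    exact ⟨stab_mul ha hb, by rw [mul_inv_rev]; exact stab_mul hb' ha'⟩
  · rintro a _ ⟨ha, ha'⟩
    exact ⟨ha', by rw [inv_inv]; exact ha⟩

lemma stab_coroot_mem {n : ℕ} {α : Fin n → V} {w : V ≃ₗ[ℝ] V}
    (hcart : ∀ k j, ∃ m : ℤ, ⟪α k, coroot (α j)⟫ = (m : ℝ))
    (hs : Stab α w) {x : V} (hx : x ∈ corootLattice α) :
    w x ∈ corootLattice α := by
  have h := (hs x (corootLattice_le_cowt hcart hx)).2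
  have e : w x = x - (x - w x) := by abel
  rw [e]
  exact AddSubgroup.sub_mem _ hx h

/-- Let `Φ` be a reduced crystallographic root system with simple roots
`α_1, …, α_n` (`n ≥ 2`), coroot lattice `R^∨`, coweight lattice `Q^∨` and Weyl group `W`,
and fix an index `i` such that the Cartan integers `⟨α_i, α_j^∨⟩` have gcd `1`.  Let
`η ∈ Q^∨` with `⟨α_i, η⟩ = 1`, set `b := t^η s_i ∈ W̃` and `ν := A_{s_i} η`.  Then the
`W̃`-conjugacy class of `b` equals the union over `u ∈ W` of the sets
`{ t^ξ (u s_i u⁻¹) : ξ ∈ (u (ν + ℝα_i^∨)) ∩ (η + R^∨) }`. -/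
theorem conjugacy_class_standard_representative_rank_one {n : ℕ} (hn : 2 ≤ n)
    (α : Fin n → V) (hα : ∀ j, α j ≠ 0)
    (hlin : LinearIndependent ℝ α)
    -- crystallographic: the Cartan integers `⟨α_k, α_j^∨⟩` are integers
    (hcart : ∀ k j, ∃ m : ℤ, ⟪α k, coroot (α j)⟫ = (m : ℝ))
    (i : Fin n) (C : Fin n → ℤ)
    (hC : ∀ j, ⟪α i, coroot (α j)⟫ = (C j : ℝ))
    -- `1` is an integer linear combination of the Cartan integers of the `i`-th row
    (hgcd : ∃ d : Fin n → ℤ, ∑ j, d j * C j = 1)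
    (η : V) (hη : η ∈ coweightLattice α) (hηi : ⟪α i, η⟫ = 1) :
    {z : Aff V | ∃ μ ∈ coweightLattice α, ∃ u ∈ weylGroup α hα,
        z = Aff.mk μ u * Aff.mk η (sRefl (α i) (hα i)) * (Aff.mk μ u)⁻¹}
      = ⋃ u ∈ (weylGroup α hα : Set (V ≃ₗ[ℝ] V)),
          {z : Aff V | ∃ ξ,
            ξ ∈ ⇑u '' {x : V | ∃ r : ℝ,
                  x = avgProj 2 (sRefl (α i) (hα i)) η + r • coroot (α i)} ∧
            ξ - η ∈ corootLattice α ∧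
            z = Aff.mk ξ (u * sRefl (α i) (hα i) * u⁻¹)} := by
  have hν : avgProj 2 (sRefl (α i) (hα i)) η = η - (2 : ℝ)⁻¹ • coroot (α i) := by
    rw [avgProj_two_apply, sRefl_apply, hηi, one_smul]
    module
  have hηc : η ∈ cowt α := hη
  have hcii : coroot (α i) ∈ corootLattice α :=
    AddSubgroup.subset_closure (Set.mem_range_self i)
  ext z
  simp only [Set.mem_setOf_eq, Set.mem_iUnion, SetLike.mem_coe, exists_prop]
  constructor
  · rintro ⟨μ, hμ, u, hu, rfl⟩
    obtain ⟨hustab, hu'stab⟩ := weyl_stab hcart hu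
    have hμc : μ ∈ cowt α := hμ
    have huμ : u⁻¹ μ ∈ cowt α := (hu'stab μ hμc).1
    obtain ⟨k, hk⟩ := huμ i
    refine ⟨u, hu, u (η + (k : ℝ) • coroot (α i)), ⟨η + (k : ℝ) • coroot (α i),
      ⟨(k : ℝ) + 2⁻¹, by rw [hν]; module⟩, rfl⟩, ?_, ?_⟩
    · have h1 : η - u η ∈ corootLattice α := (hustab η hηc).2
      have h2 : (k : ℝ) • u (coroot (α i)) ∈ corootLattice α := by
        rw [Int.cast_smul_eq_zsmul]
        exact AddSubgroup.zsmul_mem _ (stab_coroot_mem hcart hustab hcii) k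
      have e : u (η + (k : ℝ) • coroot (α i)) - η
          = (k : ℝ) • u (coroot (α i)) - (η - u η) := by
        rw [map_add, map_smul]; abel
      rw [e]
      exact AddSubgroup.sub_mem _ h2 h1
    · refine Aff.ext ?_ rfl
      show μ + u η + (u * sRefl (α i) (hα i)) (-(u⁻¹ μ))
          = u (η + (k : ℝ) • coroot (α i))
      have hsμ : sRefl (α i) (hα i) (u⁻¹ μ)
          = u⁻¹ μ - (k : ℝ) • coroot (α i) := by
        rw [sRefl_apply, hk]
      rw [Aff.mul_apply_w]
      simp only [map_neg]
      rw [hsμ]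
      simp only [map_sub, map_smul, map_add, apply_inv_apply]
      module
  · rintro ⟨u, hu, ξ, ⟨x, ⟨r, rfl⟩, rfl⟩, hξ, rfl⟩
    obtain ⟨hustab, hu'stab⟩ := weyl_stab hcart hu
    have hx : avgProj 2 (sRefl (α i) (hα i)) η + r • coroot (α i)
        = η + (r - 2⁻¹) • coroot (α i) := by
      rw [hν]; module
    rw [hx] at hξ ⊢
    have h1 : η - u η ∈ corootLattice α := (hustab η hηc).2
    have h2 : (r - 2⁻¹) • u (coroot (α i)) ∈ corootLattice α := by
      have e : (r - 2⁻¹) • u (coroot (α i))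
          = (u (η + (r - 2⁻¹) • coroot (α i)) - η) + (η - u η) := by
        rw [map_add, map_smul]; abel
      rw [e]
      exact AddSubgroup.add_mem _ hξ h1
    have h3 : (r - 2⁻¹) • coroot (α i) ∈ corootLattice α := by
      have h4 := stab_coroot_mem hcart hu'stab h2
      rwa [map_smul, inv_apply_apply] at h4
    obtain ⟨m, hm⟩ := mem_corootLattice.mp h3
    -- linear independence forces `r - 2⁻¹ = m i`
    have hti : (2 / ⟪α i, α i⟫ : ℝ) ≠ 0 :=
      div_ne_zero two_ne_zero (inner_self_ne_zero.mpr (hα i))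
    have key : ∑ j, ((if j = i then (r - 2⁻¹) * (2 / ⟪α i, α i⟫) else 0)
        - (m j : ℝ) * (2 / ⟪α j, α j⟫)) • α j = 0 := by
      simp only [sub_smul, ite_smul, zero_smul, Finset.sum_sub_distrib]
      rw [Finset.sum_ite_eq' Finset.univ i fun j => ((r - 2⁻¹) * (2 / ⟪α i, α i⟫)) • α j]
      simp only [Finset.mem_univ, if_pos]
      have e1 : ((r - 2⁻¹) * (2 / ⟪α i, α i⟫)) • α i = (r - 2⁻¹) • coroot (α i) := by
        rw [coroot, smul_smul]
      have e2 : ∀ j, ((m j : ℝ) * (2 / ⟪α j, α j⟫)) • α j = (m j : ℝ) • coroot (α j) :=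
        fun j => by rw [coroot, smul_smul]
      simp only [e1, e2]
      rw [← hm]
      abel
    have hz := Fintype.linearIndependent_iff.mp hlin _ key i
    simp only [if_pos rfl] at hz
    simp only [if_true] at hz
    have hc : r - 2⁻¹ = (m i : ℝ) := by
      have hz' : ((r - 2⁻¹) - (m i : ℝ)) * (2 / ⟪α i, α i⟫) = 0 := by
        rw [sub_mul]; exact hz
      exact sub_eq_zero.mp ((mul_eq_zero.mp hz').resolve_right hti)
    have hmη : (m i : ℝ) • η ∈ cowt α := by
      intro j
      obtain ⟨p, hp⟩ := hη j
      exact ⟨m i * p, by rw [real_inner_smul_right, hp]; push_cast; ring⟩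
    refine ⟨u ((m i : ℝ) • η), (hustab _ hmη).1, u, hu, ?_⟩
    refine Aff.ext ?_ rfl
    show u (η + (r - 2⁻¹) • coroot (α i))
        = u ((m i : ℝ) • η) + u η + (u * sRefl (α i) (hα i)) (-(u⁻¹ (u ((m i : ℝ) • η))))
    have hui : u⁻¹ (u ((m i : ℝ) • η)) = (m i : ℝ) • η := inv_apply_apply u _
    have hsm : sRefl (α i) (hα i) ((m i : ℝ) • η)
        = (m i : ℝ) • η - (m i : ℝ) • coroot (α i) := by
      rw [sRefl_apply, real_inner_smul_right, hηi, mul_one]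
    rw [hc, Aff.mul_apply_w, hui]
    simp only [map_neg]
    rw [hsm]
    simp only [map_sub, map_smul, map_add]
    module

end ADLV
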